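/- Let δ > 0 and let X be a positive real-valued random variable satisfying E[X] ≤ 1 and E[1/X] ≤ 1 + δ. Then P(|X − 1| < (3/2)·δ + √(3δ + (9/4)·δ²)) ≥ 2/3. In particular, there is a universal constant K > 0 such that for all δ that arise, P(|X − 1| < K·√δ) ≥ 2/3 when δ ≤ 1. -/

import Mathlib

open MeasureTheory

/-- If `X` is a positive random variable with `E[X] ≤ 1` and `E[1/X] ≤ 1 + δ`,
then `|X - 1| < (3/2)δ + √(3δ + (9/4)δ²)` with probability at least `2/3`; in
particular there is a universal constant `K > 0` such that, whenever `δ ≤ 1`,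
`|X - 1| < K·√δ` with probability at least `2/3`. -/
theorem stmt_11 :
    ∃ K : ℝ, 0 < K ∧
      ∀ (Ω : Type) [MeasurableSpace Ω] (μ : Measure Ω) [IsProbabilityMeasure μ]
        (X : Ω → ℝ) (δ : ℝ),
        (∀ ω, 0 < X ω) → 0 < δ →
        Integrable X μ → Integrable (fun ω => (X ω)⁻¹) μ →
        (∫ ω, X ω ∂μ) ≤ 1 → (∫ ω, (X ω)⁻¹ ∂μ) ≤ 1 + δ →
        ((2 / 3 : ℝ) ≤
            (μ {ω | |X ω - 1| < (3 / 2) * δ + Real.sqrt (3 * δ + (9 / 4) * δ ^ 2)}).toReal) ∧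
        (δ ≤ 1 →
          (2 / 3 : ℝ) ≤ (μ {ω | |X ω - 1| < K * Real.sqrt δ}).toReal) := by
  refine ⟨5, by norm_num, ?_⟩
  intro Ω _ μ _ X δ hXpos hδ hintX hintX' hEX hEX'
  set t : ℝ := (3 / 2) * δ + Real.sqrt (3 * δ + (9 / 4) * δ ^ 2) with ht
  set Y : Ω → ℝ := fun ω => X ω + (X ω)⁻¹ - 2 with hY
  have hYnn : ∀ ω, 0 ≤ Y ω := by
    intro ω
    have hx := hXpos ω
    have h1 : (X ω - 1)^2 / X ω = Y ω := by
      field_simp [hY]; simp only [hY]; field_simp; ring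
    rw [← h1]
    positivity
  have hYint : Integrable Y μ := by
    exact (hintX.add hintX').sub (integrable_const 2)
  have hEY : (∫ ω, Y ω ∂μ) ≤ δ := by
    have : (∫ ω, Y ω ∂μ) = (∫ ω, X ω ∂μ) + (∫ ω, (X ω)⁻¹ ∂μ) - 2 := by
      have h1 : (∫ ω, (X ω + (X ω)⁻¹ - 2) ∂μ)
          = (∫ ω, (X ω + (X ω)⁻¹) ∂μ) - ∫ _, (2:ℝ) ∂μ :=
        integral_sub (hintX.add hintX') (integrable_const 2)
      have h2 : (∫ ω, (X ω + (X ω)⁻¹) ∂μ)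
          = (∫ ω, X ω ∂μ) + ∫ ω, (X ω)⁻¹ ∂μ := integral_add hintX hintX'
      rw [hY]
      simp only [h1, h2, integral_const, measure_univ, ENNReal.toReal_one, probReal_univ, smul_eq_mul, one_mul]
    rw [this]; linarith
  -- Markov
  have hMarkov : 3 * δ * (μ {ω | 3 * δ ≤ Y ω}).toReal ≤ δ :=
    le_trans (mul_meas_ge_le_integral_of_nonneg (ae_of_all μ hYnn) hYint (3 * δ)) hEY
  have hA : (μ {ω | 3 * δ ≤ Y ω}).toReal ≤ 1 / 3 := by
    have h3δ : 0 < 3 * δ := by linarith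
    nlinarith [hMarkov]
  -- complement inclusion
  have hsqnn : (0:ℝ) ≤ 3 * δ + (9 / 4) * δ ^ 2 := by positivity
  have hsub : {ω | 3 * δ ≤ Y ω}ᶜ ⊆ {ω | |X ω - 1| < t} := by
    intro ω hω
    simp only [Set.mem_compl_iff, Set.mem_setOf_eq, not_le] at hω ⊢
    have hx := hXpos ω
    have hkey : (X ω - 1)^2 < 3 * δ * X ω := by
      have : (X ω - 1)^2 = X ω * Y ω := by field_simp [hY]; simp only [hY]; field_simp; ring
      rw [this]
      calc X ω * Y ω < X ω * (3 * δ) := by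
            exact mul_lt_mul_of_pos_left hω hx
        _ = 3 * δ * X ω := by ring
    have h2 : (X ω - 1 - (3/2) * δ)^2 < 3 * δ + (9/4) * δ^2 := by nlinarith
    have h3 : |X ω - 1 - (3/2) * δ| < Real.sqrt (3 * δ + (9 / 4) * δ ^ 2) := by
      rw [show Real.sqrt (3 * δ + (9 / 4) * δ ^ 2) =
        Real.sqrt (3 * δ + (9 / 4) * δ ^ 2) from rfl]
      have := Real.lt_sqrt (abs_nonneg (X ω - 1 - (3/2) * δ))
        (y := 3 * δ + (9 / 4) * δ ^ 2)
      rw [this, sq_abs]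
      exact h2
    have h4 : |X ω - 1| ≤ |X ω - 1 - (3/2) * δ| + |(3/2) * δ| := by
      have := abs_sub_abs_le_abs_sub (X ω - 1) ((3/2) * δ)
      calc |X ω - 1| = |(X ω - 1 - (3/2)*δ) + (3/2)*δ| := by ring_nf
        _ ≤ _ := abs_add_le _ _
    rw [abs_of_nonneg (by linarith : (0:ℝ) ≤ (3/2) * δ)] at h4
    rw [ht]; linarith
  -- from Markov to the main bound
  have hcompl : (2/3 : ℝ) ≤ (μ {ω | 3 * δ ≤ Y ω}ᶜ).toReal := by
    have hunion : (1 : ENNReal) ≤ μ {ω | 3 * δ ≤ Y ω} + μ {ω | 3 * δ ≤ Y ω}ᶜ := by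
      calc (1 : ENNReal) = μ Set.univ := (measure_univ).symm
        _ = μ ({ω | 3 * δ ≤ Y ω} ∪ {ω | 3 * δ ≤ Y ω}ᶜ) := by rw [Set.union_compl_self]
        _ ≤ _ := measure_union_le _ _
    have h1 : μ {ω | 3 * δ ≤ Y ω} ≠ ⊤ := measure_ne_top μ _
    have h2 : μ {ω | 3 * δ ≤ Y ω}ᶜ ≠ ⊤ := measure_ne_top μ _
    have := ENNReal.toReal_mono (by finiteness) hunion
    rw [ENNReal.toReal_add h1 h2] at this
    simp at this
    linarith
  have hmain : (2/3 : ℝ) ≤ (μ {ω | |X ω - 1| < t}).toReal := by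
    refine le_trans hcompl (ENNReal.toReal_mono (measure_ne_top μ _) (measure_mono hsub))
  refine ⟨hmain, ?_⟩
  intro hδ1
  refine le_trans hmain (ENNReal.toReal_mono (measure_ne_top μ _) (measure_mono ?_))
  intro ω hω
  simp only [Set.mem_setOf_eq] at hω ⊢
  have hts : t ≤ 5 * Real.sqrt δ := by
    set s := Real.sqrt δ with hs
    set r := Real.sqrt (3 * δ + (9 / 4) * δ ^ 2) with hr
    have hs0 : 0 ≤ s := Real.sqrt_nonneg _
    have hs2 : s^2 = δ := Real.sq_sqrt hδ.le
    have hs1 : s ≤ 1 := by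
      rw [hs]; exact Real.sqrt_le_one.mpr hδ1
    have hr0 : 0 ≤ r := Real.sqrt_nonneg _
    have hr2 : r^2 = 3 * δ + (9 / 4) * δ ^ 2 := Real.sq_sqrt hsqnn
    rw [ht]
    nlinarith [sq_nonneg (r - 5*s + (3/2)*s^2), sq_nonneg (s - 1), sq_nonneg s,
      mul_nonneg hs0 hr0, mul_nonneg (mul_nonneg hs0 hs0) hr0]
  linarith
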